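/- Let Y, U ∈ V be orthonormal (⟨Y,Y⟩ = ⟨U,U⟩ = 1, ⟨Y,U⟩ = 0). Then g_Y(Y,Y)·g_Y(U,U) − g_Y(Y,U)² = 2/(1 − ⟨Y,X⟩)⁴ + (2⟨U,X⟩² + ⟨Y,X⟩ − 1)/(1 − ⟨Y,X⟩)⁶. -/

import Mathlib

open scoped RealInnerProductSpace

/-- The Matsumoto metric `F(y) = ⟨y,y⟩ / (√⟨y,y⟩ − ⟨X,y⟩)` associated to the
vector `X` of an inner product space. -/
noncomputable def matsumotoF {V : Type*} [NormedAddCommGroup V] [InnerProductSpace ℝ V]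
    (X y : V) : ℝ :=
  ⟪y, y⟫ / (Real.sqrt ⟪y, y⟫ - ⟪X, y⟫)

/-- The fundamental tensor of the Matsumoto metric:
`g_Y(U,W) = (1/2)·∂²/∂s∂t [F²(Y + sU + tW)]` at `s = t = 0`. -/
noncomputable def matsumotoG {V : Type*} [NormedAddCommGroup V] [InnerProductSpace ℝ V]
    (X Y U W : V) : ℝ :=
  (1 / 2) * deriv (fun s : ℝ =>
    deriv (fun t : ℝ => (matsumotoF X (Y + s • U + t • W)) ^ 2) 0) 0

section Aux

variable {V : Type*} [NormedAddCommGroup V] [InnerProductSpace ℝ V]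

lemma matsumoto_denom_pos (X : V) (hX : ‖X‖ < 1/2) {y : V} (hy : y ≠ 0) :
    0 < Real.sqrt ⟪y, y⟫ - ⟪X, y⟫ := by
  have h1 : Real.sqrt ⟪y, y⟫ = ‖y‖ := by
    rw [real_inner_self_eq_norm_mul_norm, Real.sqrt_mul_self (norm_nonneg y)]
  have h2 : ⟪X, y⟫ ≤ ‖X‖ * ‖y‖ := real_inner_le_norm X y
  have h3 : 0 < ‖y‖ := norm_pos_iff.2 hy
  nlinarith

lemma matsumoto_key (X : V) (hX : ‖X‖ < 1/2) (y w : V) (hy : y ≠ 0) :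
    HasDerivAt (fun t : ℝ => matsumotoF X (y + t • w) ^ 2)
      (2 * (⟪y, y⟫ / (Real.sqrt ⟪y, y⟫ - ⟪X, y⟫)) *
        ((2 * ⟪y, w⟫ * (Real.sqrt ⟪y, y⟫ - ⟪X, y⟫)
          - ⟪y, y⟫ * (⟪y, w⟫ / Real.sqrt ⟪y, y⟫ - ⟪X, w⟫)) /
          (Real.sqrt ⟪y, y⟫ - ⟪X, y⟫) ^ 2)) 0 := by
  set A := (⟪y, y⟫ : ℝ) with hAdef
  set B := (⟪y, w⟫ : ℝ)
  set C := (⟪w, w⟫ : ℝ)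
  set β := (⟪X, y⟫ : ℝ)
  set γ := (⟪X, w⟫ : ℝ)
  have hA : 0 < A := by
    rw [hAdef, real_inner_self_eq_norm_mul_norm]
    exact mul_pos (norm_pos_iff.2 hy) (norm_pos_iff.2 hy)
  have hsA : Real.sqrt A ≠ 0 := (Real.sqrt_pos.2 hA).ne'
  have hDpos : 0 < Real.sqrt A - β := matsumoto_denom_pos X hX hy
  have hqfun : ∀ t : ℝ, ⟪y + t • w, y + t • w⟫ = A + 2*B*t + C*t^2 := by
    intro t
    rw [real_inner_add_add_self, real_inner_smul_right, real_inner_smul_left,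
      real_inner_smul_right]
    ring
  have hbfun : ∀ t : ℝ, ⟪X, y + t • w⟫ = β + γ * t := by
    intro t
    rw [inner_add_right, real_inner_smul_right]
    ring
  have hfun : (fun t : ℝ => matsumotoF X (y + t • w) ^ 2)
      = fun t => ((A + 2*B*t + C*t^2) /
          (Real.sqrt (A + 2*B*t + C*t^2) - (β + γ*t))) ^ 2 := by
    funext t
    simp only [matsumotoF, hqfun, hbfun]
  rw [hfun]
  have hq : HasDerivAt (fun t : ℝ => A + 2*B*t + C*t^2) (2*B) 0 := by
    have h1 := ((hasDerivAt_id (0:ℝ)).const_mul (2*B)).const_add A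
    have h2 := (hasDerivAt_pow 2 (0:ℝ)).const_mul C
    refine (h1.add h2).congr_deriv ?_; simp
  have hb : HasDerivAt (fun t : ℝ => β + γ * t) γ 0 := by
    simpa using ((hasDerivAt_id (0:ℝ)).const_mul γ).const_add β
  have hq0 : (fun t : ℝ => A + 2*B*t + C*t^2) 0 = A := by norm_num
  have hs : HasDerivAt (fun t : ℝ => Real.sqrt (A + 2*B*t + C*t^2))
      (1 / (2 * Real.sqrt A) * (2*B)) 0 := by
    have h0 : (A + 2*B*0 + C*0^2 : ℝ) ≠ 0 := by simpa using hA.ne'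
    have h := (Real.hasDerivAt_sqrt h0).comp 0 hq
    simp only [Function.comp_def] at h
    refine h.congr_deriv ?_; norm_num
  have hden : HasDerivAt (fun t : ℝ => Real.sqrt (A + 2*B*t + C*t^2) - (β + γ*t))
      (1 / (2 * Real.sqrt A) * (2*B) - γ) 0 := hs.sub hb
  have hdne : (fun t : ℝ => Real.sqrt (A + 2*B*t + C*t^2) - (β + γ*t)) 0 ≠ 0 := by
    simpa using hDpos.ne'
  have hF := (hq.div hden hdne).pow 2
  refine hF.congr_deriv ?_
  have hsq : Real.sqrt (A + 2*B*0 + C*0^2) = Real.sqrt A := by norm_num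
  simp only [hsq, Pi.div_apply, Nat.reduceSub, pow_one, Nat.cast_ofNat]
  have hD : Real.sqrt A - β ≠ 0 := hDpos.ne'
  rw [show (A + 2*B*0 + C*0^2 : ℝ) = A by ring, show (β + γ*0 : ℝ) = β by ring]
  field_simp

lemma matsumoto_gYY (X : V) (hX : ‖X‖ < 1/2) (Y : V) (hY : ⟪Y, Y⟫ = 1) :
    deriv (fun s : ℝ =>
      deriv (fun t : ℝ => (matsumotoF X (Y + s • Y + t • Y)) ^ 2) 0) 0
      = 2 / (1 - ⟪X, Y⟫) ^ 2 := by
  set a := (⟪X, Y⟫ : ℝ) with hadef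
  have ha : |a| < 1/2 := by
    have h1 := abs_real_inner_le_norm X Y
    have h2 : ‖Y‖ = 1 := by
      have := real_inner_self_eq_norm_mul_norm Y
      nlinarith [norm_nonneg Y]
    rw [h2, mul_one] at h1
    calc |a| ≤ ‖X‖ := h1
    _ < 1/2 := hX
  have hd : (1 - a) ≠ 0 := by
    have := abs_lt.1 ha; linarith [this.2]
  have heq : ∀ s ∈ Set.Ioo (-(1/2) : ℝ) (1/2),
      deriv (fun t : ℝ => (matsumotoF X (Y + s • Y + t • Y)) ^ 2) 0
        = 2 * (1 + s) / (1 - a) ^ 2 := by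
    intro s hs
    obtain ⟨hs1, hs2⟩ := hs
    have hs3 : (0:ℝ) < 1 + s := by linarith
    have hA : ⟪Y + s • Y, Y + s • Y⟫ = (1+s)^2 := by
      rw [real_inner_add_add_self]
      simp only [real_inner_smul_left, real_inner_smul_right, hY]
      ring
    have hy : Y + s • Y ≠ 0 := by
      intro h
      rw [h] at hA
      simp at hA
      nlinarith
    have hB : ⟪Y + s • Y, Y⟫ = 1 + s := by
      rw [inner_add_left, real_inner_smul_left, hY]; ring
    have hβ : ⟪X, Y + s • Y⟫ = (1+s) * a := by
      rw [inner_add_right, real_inner_smul_right]; ring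
    rw [(matsumoto_key X hX (Y + s • Y) Y hy).deriv, hA, hB, hβ]
    rw [Real.sqrt_sq hs3.le]
    have hden : (1 + s) - (1+s)*a ≠ 0 := by
      have : (1 + s) - (1+s)*a = (1+s)*(1-a) := by ring
      rw [this]
      exact mul_ne_zero hs3.ne' hd
    field_simp
    ring
  have hev : (fun s : ℝ =>
      deriv (fun t : ℝ => (matsumotoF X (Y + s • Y + t • Y)) ^ 2) 0)
      =ᶠ[nhds (0:ℝ)] fun s => 2 * (1 + s) / (1 - a) ^ 2 := by
    filter_upwards [Ioo_mem_nhds (by norm_num : (-(1/2):ℝ) < 0) (by norm_num : (0:ℝ) < 1/2)]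
      with s hs using heq s hs
  rw [hev.deriv_eq]
  have h : HasDerivAt (fun s : ℝ => 2 * (1 + s) / (1 - a) ^ 2) (2 / (1-a)^2) 0 := by
    have h1 : HasDerivAt (fun s : ℝ => 2 * (1 + s)) 2 0 := by
      simpa using ((hasDerivAt_id (0:ℝ)).const_add 1).const_mul 2
    simpa using h1.div_const ((1-a)^2)
  exact h.deriv

lemma matsumoto_gYU (X : V) (hX : ‖X‖ < 1/2) (Y U : V) (hY : ⟪Y, Y⟫ = 1)
    (hYU : ⟪Y, U⟫ = 0) :
    deriv (fun s : ℝ =>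
      deriv (fun t : ℝ => (matsumotoF X (Y + s • Y + t • U)) ^ 2) 0) 0
      = 2 * ⟪X, U⟫ / (1 - ⟪X, Y⟫) ^ 3 := by
  set a := (⟪X, Y⟫ : ℝ) with hadef
  set c := (⟪X, U⟫ : ℝ) with hcdef
  have ha : |a| < 1/2 := by
    have h1 := abs_real_inner_le_norm X Y
    have h2 : ‖Y‖ = 1 := by
      have := real_inner_self_eq_norm_mul_norm Y
      nlinarith [norm_nonneg Y]
    rw [h2, mul_one] at h1
    calc |a| ≤ ‖X‖ := h1
    _ < 1/2 := hX
  have hd : (1 - a) ≠ 0 := by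
    have := abs_lt.1 ha; linarith [this.2]
  have heq : ∀ s ∈ Set.Ioo (-(1/2) : ℝ) (1/2),
      deriv (fun t : ℝ => (matsumotoF X (Y + s • Y + t • U)) ^ 2) 0
        = 2 * c * (1 + s) / (1 - a) ^ 3 := by
    intro s hs
    obtain ⟨hs1, hs2⟩ := hs
    have hs3 : (0:ℝ) < 1 + s := by linarith
    have hA : ⟪Y + s • Y, Y + s • Y⟫ = (1+s)^2 := by
      rw [real_inner_add_add_self]
      simp only [real_inner_smul_left, real_inner_smul_right, hY]
      ring
    have hy : Y + s • Y ≠ 0 := by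
      intro h
      rw [h] at hA
      simp at hA
      nlinarith
    have hB : ⟪Y + s • Y, U⟫ = 0 := by
      rw [inner_add_left, real_inner_smul_left, hYU]; ring
    have hβ : ⟪X, Y + s • Y⟫ = (1+s) * a := by
      rw [inner_add_right, real_inner_smul_right]; ring
    rw [(matsumoto_key X hX (Y + s • Y) U hy).deriv, hA, hB, hβ]
    rw [Real.sqrt_sq hs3.le]
    have hden : (1 + s) - (1+s)*a ≠ 0 := by
      have : (1 + s) - (1+s)*a = (1+s)*(1-a) := by ring
      rw [this]
      exact mul_ne_zero hs3.ne' hd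
    field_simp
    ring
  have hev : (fun s : ℝ =>
      deriv (fun t : ℝ => (matsumotoF X (Y + s • Y + t • U)) ^ 2) 0)
      =ᶠ[nhds (0:ℝ)] fun s => 2 * c * (1 + s) / (1 - a) ^ 3 := by
    filter_upwards [Ioo_mem_nhds (by norm_num : (-(1/2):ℝ) < 0) (by norm_num : (0:ℝ) < 1/2)]
      with s hs using heq s hs
  rw [hev.deriv_eq]
  have h : HasDerivAt (fun s : ℝ => 2 * c * (1 + s) / (1 - a) ^ 3) (2*c / (1-a)^3) 0 := by
    have h1 : HasDerivAt (fun s : ℝ => 2 * c * (1 + s)) (2*c) 0 := by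
      simpa using ((hasDerivAt_id (0:ℝ)).const_add 1).const_mul (2*c)
    simpa using h1.div_const ((1-a)^3)
  exact h.deriv

lemma matsumoto_gUU (X : V) (hX : ‖X‖ < 1/2) (Y U : V) (hY : ⟪Y, Y⟫ = 1)
    (hU : ⟪U, U⟫ = 1) (hYU : ⟪Y, U⟫ = 0) :
    deriv (fun s : ℝ =>
      deriv (fun t : ℝ => (matsumotoF X (Y + s • U + t • U)) ^ 2) 0) 0
      = (4 * (1 - ⟪X, Y⟫) - 2) / (1 - ⟪X, Y⟫) ^ 3
        + 6 * ⟪X, U⟫ ^ 2 / (1 - ⟪X, Y⟫) ^ 4 := by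
  set a := (⟪X, Y⟫ : ℝ) with hadef
  set c := (⟪X, U⟫ : ℝ) with hcdef
  have ha : |a| < 1/2 := by
    have h1 := abs_real_inner_le_norm X Y
    have h2 : ‖Y‖ = 1 := by
      have := real_inner_self_eq_norm_mul_norm Y
      nlinarith [norm_nonneg Y]
    rw [h2, mul_one] at h1
    calc |a| ≤ ‖X‖ := h1
    _ < 1/2 := hX
  have hd : (1 - a) ≠ 0 := by
    have := abs_lt.1 ha; linarith [this.2]
  have hg1 : (fun s : ℝ =>
      deriv (fun t : ℝ => (matsumotoF X (Y + s • U + t • U)) ^ 2) 0)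
      = fun s : ℝ => 2 * ((1 + s^2) / (Real.sqrt (1 + s^2) - (a + s * c))) *
        ((2 * s * (Real.sqrt (1 + s^2) - (a + s * c))
          - (1 + s^2) * (s / Real.sqrt (1 + s^2) - c)) /
          (Real.sqrt (1 + s^2) - (a + s * c)) ^ 2) := by
    funext s
    have hA : ⟪Y + s • U, Y + s • U⟫ = 1 + s^2 := by
      rw [real_inner_add_add_self]
      simp only [real_inner_smul_left, real_inner_smul_right, hY, hU, hYU]
      ring
    have hy : Y + s • U ≠ 0 := by
      intro h
      rw [h] at hA
      simp at hA
      nlinarith [sq_nonneg s]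
    have hB : ⟪Y + s • U, U⟫ = s := by
      rw [inner_add_left, real_inner_smul_left, hYU, hU]; ring
    have hβ : ⟪X, Y + s • U⟫ = a + s * c := by
      rw [inner_add_right, real_inner_smul_right]
    rw [(matsumoto_key X hX (Y + s • U) U hy).deriv, hA, hB, hβ]
  rw [hg1]
  have h1 : HasDerivAt (fun s : ℝ => 1 + s^2) 0 0 := by
    simpa using (hasDerivAt_pow 2 (0:ℝ)).const_add 1
  have hr : HasDerivAt (fun s : ℝ => Real.sqrt (1 + s^2)) 0 0 := by
    have h0 : (1 + (0:ℝ)^2) ≠ 0 := by norm_num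
    have h := (Real.hasDerivAt_sqrt h0).comp 0 h1
    simp only [Function.comp_def] at h
    simpa using h
  have hr0 : Real.sqrt (1 + (0:ℝ)^2) = 1 := by norm_num
  have hlin : HasDerivAt (fun s : ℝ => a + s * c) c 0 := by
    simpa using ((hasDerivAt_id (0:ℝ)).mul_const c).const_add a
  have hD : HasDerivAt (fun s : ℝ => Real.sqrt (1 + s^2) - (a + s * c)) (0 - c) 0 :=
    hr.sub hlin
  have hD0 : (fun s : ℝ => Real.sqrt (1 + s^2) - (a + s * c)) 0 = 1 - a := by
    simp [hr0]
  have hDne : (fun s : ℝ => Real.sqrt (1 + s^2) - (a + s * c)) 0 ≠ 0 := by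
    rw [hD0]; exact hd
  have hrne : Real.sqrt (1 + (0:ℝ)^2) ≠ 0 := by rw [hr0]; norm_num
  have hfac1 := (h1.div hD hDne).const_mul 2
  have hn1 := ((hasDerivAt_id (0:ℝ)).const_mul 2).mul hD
  have hdiv := (hasDerivAt_id (0:ℝ)).div hr hrne
  have hn2 := h1.mul (hdiv.sub_const c)
  have hN := hn1.sub hn2
  have hD2 := hD.pow 2
  have hD2ne : ((fun s : ℝ => Real.sqrt (1 + s^2) - (a + s * c)) 0)^2 ≠ 0 :=
    pow_ne_zero 2 hDne
  have hfrac := hN.div hD2 (by simpa using hD2ne)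
  have htot := hfac1.mul hfrac
  have hval : HasDerivAt (fun s : ℝ => 2 * ((1 + s^2) / (Real.sqrt (1 + s^2) - (a + s * c))) *
        ((2 * s * (Real.sqrt (1 + s^2) - (a + s * c))
          - (1 + s^2) * (s / Real.sqrt (1 + s^2) - c)) /
          (Real.sqrt (1 + s^2) - (a + s * c)) ^ 2))
      ((4 * (1 - a) - 2) / (1 - a) ^ 3 + 6 * c ^ 2 / (1 - a) ^ 4) 0 := by
    refine htot.congr_deriv ?_
    simp only [hr0]
    norm_num
    field_simp
    ring
  exact hval.deriv

end Aux

theorem matsumotoG_det_formula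
    {V : Type*} [NormedAddCommGroup V] [InnerProductSpace ℝ V] [FiniteDimensional ℝ V]
    (X : V) (hX : ‖X‖ < 1 / 2) (Y U : V)
    (hY : ⟪Y, Y⟫ = 1) (hU : ⟪U, U⟫ = 1) (hYU : ⟪Y, U⟫ = 0) :
    matsumotoG X Y Y Y * matsumotoG X Y U U - matsumotoG X Y Y U ^ 2 =
      2 / (1 - ⟪Y, X⟫) ^ 4 + (2 * ⟪U, X⟫ ^ 2 + ⟪Y, X⟫ - 1) / (1 - ⟪Y, X⟫) ^ 6 := by
  have hX' : ‖X‖ < 1/2 := hX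
  have hYX : (⟪Y, X⟫ : ℝ) = ⟪X, Y⟫ := (real_inner_comm Y X).symm
  have hUX : (⟪U, X⟫ : ℝ) = ⟪X, U⟫ := (real_inner_comm U X).symm
  set a := (⟪X, Y⟫ : ℝ) with hadef
  set c := (⟪X, U⟫ : ℝ) with hcdef
  have ha : |a| < 1/2 := by
    have h1 := abs_real_inner_le_norm X Y
    have h2 : ‖Y‖ = 1 := by
      have := real_inner_self_eq_norm_mul_norm Y
      nlinarith [norm_nonneg Y]
    rw [h2, mul_one] at h1
    calc |a| ≤ ‖X‖ := h1
    _ < 1/2 := hX'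
  have hd : (1 - a) ≠ 0 := by
    have := abs_lt.1 ha; linarith [this.2]
  simp only [matsumotoG]
  rw [matsumoto_gYY X hX' Y hY, matsumoto_gUU X hX' Y U hY hU hYU,
    matsumoto_gYU X hX' Y U hY hYU, hYX, hUX]
  rw [← hadef, ← hcdef]
  field_simp
  ring
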